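/- If G is a graph on n vertices that is not the complete graph, then for any vertex s, the number of s-rooted acyclic orientations of G is strictly less than (n−1)!. Consequently, among all connected graphs on n vertices, the complete graph uniquely maximizes the number of s-rooted acyclic orientations. -/

import Mathlib

/-- An acyclic orientation of a simple graph: each edge gets exactly one direction,
and there are no directed cycles. -/
structure AcyclicOrientation {V : Type*} (G : SimpleGraph V) where
  dir : V → V → Prop
  adj_of_dir : ∀ a b, dir a b → G.Adj a b
  total : ∀ a b, G.Adj a b → dir a b ∨ dir b a
  asymm : ∀ a b, dir a b → ¬ dir b a
  acyclic : ∀ v, ¬ Relation.TransGen dir v v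

/-- `s` is a target: all incident edges are directed towards `s`. -/
def AcyclicOrientation.IsTarget {V : Type*} {G : SimpleGraph V}
    (o : AcyclicOrientation G) (s : V) : Prop :=
  ∀ a, G.Adj a s → o.dir a s

/-- `s` is a source: all incident edges are directed away from `s`. -/
def AcyclicOrientation.IsSource {V : Type*} {G : SimpleGraph V}
    (o : AcyclicOrientation G) (s : V) : Prop :=
  ∀ a, G.Adj s a → o.dir s a

/-- An `s`-rooted acyclic orientation: `s` is the unique target. -/
def AcyclicOrientation.IsRooted {V : Type*} {G : SimpleGraph V}
    (o : AcyclicOrientation G) (s : V) : Prop :=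
  o.IsTarget s ∧ ∀ t, o.IsTarget t → t = s

/-- The number of `s`-rooted acyclic orientations of `G`. -/
noncomputable def rootedCount {V : Type*} (G : SimpleGraph V) (s : V) : ℕ :=
  Nat.card {o : AcyclicOrientation G // o.IsRooted s}

section Aux

variable {V : Type*} {G : SimpleGraph V}

lemma AcyclicOrientation.ext' {o o' : AcyclicOrientation G} (h : o.dir = o'.dir) : o = o' := by
  cases o; cases o'; cases h; rfl

instance [Finite V] : Finite (AcyclicOrientation G) :=
  Finite.of_injective (fun o => o.dir) fun _ _ h => AcyclicOrientation.ext' h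

lemma aux_linear {α : Type*} [Fintype α] {k : ℕ} (r : α → α → Prop) (hlin : IsLinearOrder α r)
    (h : Fintype.card α = k) : ∃ f : α ≃ Fin k, ∀ a b, r a b → a ≠ b → f a < f b := by
  haveI := hlin
  letI : LinearOrder α :=
  { le := r
    le_refl := refl_of r
    le_trans := fun _ _ _ => trans_of r
    le_antisymm := fun _ _ => antisymm_of r
    le_total := total_of r
    toDecidableLE := fun _ _ => Classical.dec _ }
  exact ⟨(monoEquivOfFin α h).symm.toEquiv, fun a b hr hne =>
    (monoEquivOfFin α h).symm.strictMono (lt_of_le_of_ne hr hne)⟩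

lemma card_ne_aux {m : ℕ} (s : Fin (m+1)) :
    Fintype.card {x : Fin (m+1) // x ≠ s} = m := by
  simp [Fintype.card_subtype_compl]

lemma exists_sort {m : ℕ} {G : SimpleGraph (Fin (m+1))} (s : Fin (m+1))
    (o : AcyclicOrientation G) :
    ∃ f : {x : Fin (m+1) // x ≠ s} ≃ Fin m,
      ∀ a b : {x : Fin (m+1) // x ≠ s}, o.dir a.1 b.1 → f a < f b := by
  let r : {x : Fin (m+1) // x ≠ s} → {x : Fin (m+1) // x ≠ s} → Prop :=
    fun a b => Relation.TransGen o.dir a.1 b.1 ∨ a = b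
  haveI : IsPartialOrder {x : Fin (m+1) // x ≠ s} r :=
  { refl := fun _ => Or.inr rfl
    trans := by
      rintro a b c (h | rfl) (h' | rfl)
      · exact Or.inl (h.trans h')
      · exact Or.inl h
      · exact Or.inl h'
      · exact Or.inr rfl
    antisymm := by
      rintro a b (h | rfl) h'
      · rcases h' with h' | rfl
        · exact absurd (h.trans h') (o.acyclic a.1)
        · rfl
      · rfl }
  obtain ⟨r', hlin, hle⟩ := extend_partialOrder r
  obtain ⟨f, hf⟩ := aux_linear r' hlin (card_ne_aux s)
  refine ⟨f, fun a b hd => ?_⟩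
  have hab : a ≠ b := by
    rintro rfl
    exact o.acyclic a.1 (Relation.TransGen.single hd)
  exact hf a b (hle _ _ (Or.inl (Relation.TransGen.single hd))) hab

lemma recover {m : ℕ} {G : SimpleGraph (Fin (m+1))} {s : Fin (m+1)}
    {o : AcyclicOrientation G} (ho : o.IsRooted s)
    {f : {x : Fin (m+1) // x ≠ s} ≃ Fin m}
    (hf : ∀ a b : {x : Fin (m+1) // x ≠ s}, o.dir a.1 b.1 → f a < f b)
    (a b : Fin (m+1)) :
    o.dir a b ↔ G.Adj a b ∧ (b = s ∨ ∃ (ha : a ≠ s) (hb : b ≠ s), f ⟨a, ha⟩ < f ⟨b, hb⟩) := by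
  constructor
  · intro hd
    have hadj := o.adj_of_dir a b hd
    refine ⟨hadj, ?_⟩
    by_cases hb : b = s
    · exact Or.inl hb
    · have ha : a ≠ s := by
        rintro rfl
        exact o.asymm _ _ hd (ho.1 b hadj.symm)
      exact Or.inr ⟨ha, hb, hf ⟨a, ha⟩ ⟨b, hb⟩ hd⟩
  · rintro ⟨hadj, rfl | ⟨ha, hb, hlt⟩⟩
    · exact ho.1 a hadj
    · rcases o.total a b hadj with hd | hd
      · exact hd
      · exact absurd hlt (lt_asymm (hf ⟨b, hb⟩ ⟨a, ha⟩ hd))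

lemma swap01_lt_iff {k : ℕ} (u v : Fin (k+2)) (h1 : ¬(u = 0 ∧ v = 1)) (h2 : ¬(u = 1 ∧ v = 0)) :
    (Equiv.swap (0 : Fin (k+2)) 1 u < Equiv.swap (0 : Fin (k+2)) 1 v ↔ u < v) := by
  have h01' : (0 : Fin (k+2)) ≠ 1 := by simp [Fin.ext_iff]
  have hsw : ∀ w : Fin (k+2), Equiv.swap (0 : Fin (k+2)) 1 w =
      if w = 0 then 1 else if w = 1 then 0 else w := by
    intro w
    rcases eq_or_ne w 0 with rfl | h0
    · rw [Equiv.swap_apply_left, if_pos rfl]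
    rcases eq_or_ne w 1 with rfl | hw1
    · rw [Equiv.swap_apply_right, if_neg (fun h => h01' h.symm), if_pos rfl]
    · rw [Equiv.swap_apply_of_ne_of_ne h0 hw1, if_neg h0, if_neg hw1]
  rw [hsw, hsw]
  rw [Fin.lt_def, Fin.lt_def]
  have h1' : ¬(u.val = 0 ∧ v.val = 1) := fun ⟨ha, hb⟩ => h1 ⟨Fin.ext (by simp [ha]), Fin.ext (by simp [hb])⟩
  have h2' : ¬(u.val = 1 ∧ v.val = 0) := fun ⟨ha, hb⟩ => h2 ⟨Fin.ext (by simp [ha]), Fin.ext (by simp [hb])⟩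
  split_ifs <;>
    simp only [Fin.ext_iff, Fin.val_zero, Fin.val_one, not_and] at * <;>
    omega

end Aux

section Main

variable {m : ℕ} {G : SimpleGraph (Fin (m+1))} {s : Fin (m+1)}

lemma key_exists (G : SimpleGraph (Fin (m+1))) (s : Fin (m+1)) :
    ∃ F : {o : AcyclicOrientation G // o.IsRooted s} → ({x : Fin (m+1) // x ≠ s} ≃ Fin m),
      Function.Injective F ∧
      ∀ o, ∀ a b : {x : Fin (m+1) // x ≠ s}, o.1.dir a.1 b.1 → (F o) a < (F o) b := by
  choose F hF using fun o : {o : AcyclicOrientation G // o.IsRooted s} => exists_sort s o.1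
  refine ⟨F, ?_, hF⟩
  intro o o' h
  refine Subtype.ext (AcyclicOrientation.ext' (funext fun a => funext fun b => ?_))
  have e1 := recover o.2 (hF o) a b
  have e2 := recover o'.2 (hF o') a b
  rw [h] at e1
  exact propext (e1.trans e2.symm)

lemma case_s {F : {o : AcyclicOrientation G // o.IsRooted s} → ({x : Fin (m+1) // x ≠ s} ≃ Fin m)}
    (hFprop : ∀ o, ∀ a b : {x : Fin (m+1) // x ≠ s}, o.1.dir a.1 b.1 → (F o) a < (F o) b)
    {a : Fin (m+1)} (ha : a ≠ s) (hnadj : ¬ G.Adj a s) :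
    ∃ g, g ∉ Set.range F := by
  obtain ⟨k, rfl⟩ : ∃ k, m = k + 1 := by
    have h1 : a.val ≠ s.val := by simpa [Fin.ext_iff] using ha
    have := a.2; have := s.2
    exact ⟨m - 1, by omega⟩
  let e := Fintype.equivFinOfCardEq (card_ne_aux s)
  let g := e.trans (Equiv.swap (e ⟨a, ha⟩) (Fin.last k))
  have hga : g ⟨a, ha⟩ = Fin.last k := by simp [g]
  refine ⟨g, ?_⟩
  rintro ⟨o, ho⟩
  have htar : o.1.IsTarget a := by
    intro x hx
    have hxs : x ≠ s := by
      rintro rfl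
      exact hnadj hx.symm
    rcases o.1.total x a hx with hd | hd
    · exact hd
    · exfalso
      have hlt := hFprop o ⟨a, ha⟩ ⟨x, hxs⟩ hd
      rw [ho, hga] at hlt
      exact absurd hlt (Fin.le_last _).not_gt
  exact ha (o.2.2 a htar)

lemma case_ns {F : {o : AcyclicOrientation G // o.IsRooted s} → ({x : Fin (m+1) // x ≠ s} ≃ Fin m)}
    (hFprop : ∀ o, ∀ a b : {x : Fin (m+1) // x ≠ s}, o.1.dir a.1 b.1 → (F o) a < (F o) b)
    {a b : Fin (m+1)} (ha : a ≠ s) (hb : b ≠ s) (hab : a ≠ b) (hnadj : ¬ G.Adj a b) :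
    ∃ g, g ∉ Set.range F := by
  obtain ⟨k, rfl⟩ : ∃ k, m = k + 2 := by
    have h1 : a.val ≠ s.val := by simpa [Fin.ext_iff] using ha
    have h2 : b.val ≠ s.val := by simpa [Fin.ext_iff] using hb
    have h3 : a.val ≠ b.val := by simpa [Fin.ext_iff] using hab
    have := a.2; have := b.2; have := s.2
    exact ⟨m - 2, by omega⟩
  set A : {x : Fin (k+2+1) // x ≠ s} := ⟨a, ha⟩ with hA
  set B : {x : Fin (k+2+1) // x ≠ s} := ⟨b, hb⟩ with hB
  have hAB : A ≠ B := by simp [hA, hB, Subtype.ext_iff, hab]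
  let e := Fintype.equivFinOfCardEq (card_ne_aux s)
  let h1 := e.trans (Equiv.swap (e A) 0)
  have h1A : h1 A = 0 := by simp [h1]
  have hc0 : h1 B ≠ 0 := fun h => hAB (h1.injective (by rw [h, h1A]))
  let f0 := h1.trans (Equiv.swap (h1 B) 1)
  have h01 : (0 : Fin (k+2)) ≠ 1 := by simp [Fin.ext_iff]
  have hf0A : f0 A = 0 := by
    simp only [f0, Equiv.trans_apply, h1A]
    exact Equiv.swap_apply_of_ne_of_ne (Ne.symm hc0) h01
  have hf0B : f0 B = 1 := by simp [f0]
  let f' := f0.trans (Equiv.swap (0 : Fin (k+2)) 1)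
  have hf'A : f' A = 1 := by simp [f', hf0A]
  by_contra hcon
  push_neg at hcon
  obtain ⟨o, ho⟩ := hcon f0
  obtain ⟨o', ho'⟩ := hcon f'
  have hp : ∀ x y : {w : Fin (k+2+1) // w ≠ s}, o.1.dir x.1 y.1 → f0 x < f0 y := by
    intro x y hd
    have := hFprop o x y hd
    rwa [ho] at this
  have hp' : ∀ x y : {w : Fin (k+2+1) // w ≠ s}, o'.1.dir x.1 y.1 → f' x < f' y := by
    intro x y hd
    have := hFprop o' x y hd
    rwa [ho'] at this
  have hoo : o = o' := by
    refine Subtype.ext (AcyclicOrientation.ext' (funext fun x => funext fun y => ?_))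
    have e1 := recover o.2 hp x y
    have e2 := recover o'.2 hp' x y
    refine propext (e1.trans (Iff.trans ?_ e2.symm))
    constructor <;> rintro ⟨hadj, hrest⟩ <;> refine ⟨hadj, ?_⟩
    · rcases hrest with hy | ⟨hx, hy, hlt⟩
      · exact Or.inl hy
      · refine Or.inr ⟨hx, hy, ?_⟩
        show Equiv.swap (0 : Fin (k+2)) 1 (f0 ⟨x, hx⟩) < Equiv.swap (0 : Fin (k+2)) 1 (f0 ⟨y, hy⟩)
        rw [swap01_lt_iff]
        · exact hlt
        · rintro ⟨hu, hv⟩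
          have hx' : (⟨x, hx⟩ : {w : Fin (k+2+1) // w ≠ s}) = A := f0.injective (by rw [hu, hf0A])
          have hy' : (⟨y, hy⟩ : {w : Fin (k+2+1) // w ≠ s}) = B := f0.injective (by rw [hv, hf0B])
          apply hnadj
          rwa [← show x = a from congrArg Subtype.val hx',
               ← show y = b from congrArg Subtype.val hy']
        · rintro ⟨hu, hv⟩
          have hx' : (⟨x, hx⟩ : {w : Fin (k+2+1) // w ≠ s}) = B := f0.injective (by rw [hu, hf0B])
          have hy' : (⟨y, hy⟩ : {w : Fin (k+2+1) // w ≠ s}) = A := f0.injective (by rw [hv, hf0A])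
          apply hnadj
          have : G.Adj b a := by
            rwa [← show x = b from congrArg Subtype.val hx',
                 ← show y = a from congrArg Subtype.val hy']
          exact this.symm
    · rcases hrest with hy | ⟨hx, hy, hlt⟩
      · exact Or.inl hy
      · refine Or.inr ⟨hx, hy, ?_⟩
        have hlt' : Equiv.swap (0 : Fin (k+2)) 1 (f0 ⟨x, hx⟩) <
            Equiv.swap (0 : Fin (k+2)) 1 (f0 ⟨y, hy⟩) := hlt
        rw [swap01_lt_iff] at hlt'
        · exact hlt'
        · rintro ⟨hu, hv⟩
          have hx' : (⟨x, hx⟩ : {w : Fin (k+2+1) // w ≠ s}) = A := f0.injective (by rw [hu, hf0A])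
          have hy' : (⟨y, hy⟩ : {w : Fin (k+2+1) // w ≠ s}) = B := f0.injective (by rw [hv, hf0B])
          apply hnadj
          rwa [← show x = a from congrArg Subtype.val hx',
               ← show y = b from congrArg Subtype.val hy']
        · rintro ⟨hu, hv⟩
          have hx' : (⟨x, hx⟩ : {w : Fin (k+2+1) // w ≠ s}) = B := f0.injective (by rw [hu, hf0B])
          have hy' : (⟨y, hy⟩ : {w : Fin (k+2+1) // w ≠ s}) = A := f0.injective (by rw [hv, hf0A])
          apply hnadj
          have : G.Adj b a := by
            rwa [← show x = b from congrArg Subtype.val hx',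
                 ← show y = a from congrArg Subtype.val hy']
          exact this.symm
  rw [hoo, ho'] at ho
  have : f0 A = f' A := by rw [ho]
  rw [hf0A, hf'A] at this
  exact h01 this

end Main

/-- A non-complete graph on `n` vertices has strictly fewer than `(n-1)!` `s`-rooted
acyclic orientations; consequently the complete graph uniquely maximizes the number
of `s`-rooted acyclic orientations among connected graphs on `n` vertices. -/
theorem rootedCount_lt_of_ne_complete (n : ℕ) (s : Fin n) :
    (∀ G : SimpleGraph (Fin n), G ≠ ⊤ → rootedCount G s < Nat.factorial (n - 1)) ∧
    (∀ G : SimpleGraph (Fin n), G.Connected →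
      rootedCount G s ≤ Nat.factorial (n - 1) ∧
      (rootedCount G s = Nat.factorial (n - 1) → G = ⊤)) := by
  rcases n with _ | m
  · exact s.elim0
  have hTcard : Fintype.card ({x : Fin (m+1) // x ≠ s} ≃ Fin m) = m.factorial := by
    rw [Fintype.card_equiv (Fintype.equivFinOfCardEq (card_ne_aux s)), card_ne_aux s]
  have hle : ∀ G : SimpleGraph (Fin (m+1)), rootedCount G s ≤ m.factorial := by
    intro G
    obtain ⟨F, hFinj, -⟩ := key_exists G s
    have h := Nat.card_le_card_of_injective F hFinj
    rwa [Nat.card_eq_fintype_card (α := ({x : Fin (m+1) // x ≠ s} ≃ Fin m)), hTcard] at h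
  have hlt : ∀ G : SimpleGraph (Fin (m+1)), G ≠ ⊤ → rootedCount G s < m.factorial := by
    intro G hG
    obtain ⟨a, b, hab, hnadj⟩ : ∃ a b : Fin (m+1), a ≠ b ∧ ¬ G.Adj a b := by
      by_contra hcon
      push_neg at hcon
      apply hG
      ext a b
      simp only [SimpleGraph.top_adj]
      exact ⟨fun h => h.ne, fun h => hcon a b h⟩
    obtain ⟨F, hFinj, hFprop⟩ := key_exists G s
    have hmiss : ∃ g, g ∉ Set.range F := by
      by_cases hbs : b = s
      · subst hbs
        exact case_s hFprop hab hnadj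
      by_cases has : a = s
      · subst has
        exact case_s hFprop hbs (fun h => hnadj h.symm)
      · exact case_ns hFprop has hbs hab hnadj
    obtain ⟨g, hg⟩ := hmiss
    letI : Fintype {o : AcyclicOrientation G // o.IsRooted s} := Fintype.ofFinite _
    have h := Fintype.card_lt_of_injective_of_notMem F hFinj hg
    rw [hTcard] at h
    unfold rootedCount
    rwa [Nat.card_eq_fintype_card]
  refine ⟨hlt, fun G _ => ⟨hle G, fun hEq => ?_⟩⟩
  by_contra hne
  exact (hlt G hne).ne hEq
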